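/- Full-matrix AdaGrad preconditioner trace bound: for vectors g_1, …, g_T ∈ ℝ^d, letting G_t = Σ_{s≤t} g_s g_sᵀ and H_t = G_t^{1/2}, one has Σ_{t=1}^T g_tᵀ H_t† g_t ≤ 2 tr(H_T), where H_t† is the Moore–Penrose pseudoinverse and each g_t lies in the range of G_t. -/

import Mathlib

open Matrix

/-- The square root of a positive semidefinite matrix, as defined in Mathlib (December 2024);
it was removed from Mathlib in favour of `CFC.sqrt`. -/
noncomputable def Matrix.PosSemidef.sqrt {n : Type*} [Fintype n] [DecidableEq n] {𝕜 : Type*}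
    [RCLike 𝕜] [PartialOrder 𝕜] {A : Matrix n n 𝕜} (hA : A.PosSemidef) : Matrix n n 𝕜 :=
  hA.1.eigenvectorUnitary.1 * diagonal ((↑) ∘ (√·) ∘ hA.1.eigenvalues) *
    (star hA.1.eigenvectorUnitary : Matrix n n 𝕜)

lemma Matrix.PosSemidef.posSemidef_sqrt {n : Type*} [Fintype n] [DecidableEq n]
    {A : Matrix n n ℝ} (hA : A.PosSemidef) : hA.sqrt.PosSemidef := by
  have hD : (diagonal ((↑) ∘ (√·) ∘ hA.1.eigenvalues) : Matrix n n ℝ).PosSemidef :=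
    Matrix.PosSemidef.diagonal (fun i => by simpa using Real.sqrt_nonneg _)
  have h := hD.mul_mul_conjTranspose_same (hA.1.eigenvectorUnitary.1)
  unfold Matrix.PosSemidef.sqrt
  rwa [← Matrix.star_eq_conjTranspose] at h

lemma Matrix.PosSemidef.sqrt_mul_self {n : Type*} [Fintype n] [DecidableEq n]
    {A : Matrix n n ℝ} (hA : A.PosSemidef) : hA.sqrt * hA.sqrt = A := by
  have hU : (star hA.1.eigenvectorUnitary : Matrix n n ℝ) * hA.1.eigenvectorUnitary.1 = 1 :=
    Unitary.coe_star_mul_self _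
  have hDD : (diagonal ((↑) ∘ (√·) ∘ hA.1.eigenvalues) : Matrix n n ℝ) *
      diagonal ((↑) ∘ (√·) ∘ hA.1.eigenvalues) = diagonal (RCLike.ofReal ∘ hA.1.eigenvalues) := by
    rw [diagonal_mul_diagonal]
    congr 1
    funext i
    simp [Real.mul_self_sqrt (hA.eigenvalues_nonneg i)]
  unfold Matrix.PosSemidef.sqrt
  conv_rhs => rw [hA.1.spectral_theorem, Unitary.conjStarAlgAut_apply]
  calc _ = hA.1.eigenvectorUnitary.1 * diagonal ((↑) ∘ (√·) ∘ hA.1.eigenvalues) *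
        ((star hA.1.eigenvectorUnitary : Matrix n n ℝ) * hA.1.eigenvectorUnitary.1) *
        diagonal ((↑) ∘ (√·) ∘ hA.1.eigenvalues) *
        (star hA.1.eigenvectorUnitary : Matrix n n ℝ) := by simp only [Matrix.mul_assoc]; rfl
    _ = _ := by rw [hU, Matrix.mul_one, Matrix.mul_assoc _ (diagonal _) (diagonal _), hDD]

section Aux

variable {n : Type*} [Fintype n]

lemma trace_nonneg_of_psd {M : Matrix n n ℝ} (hM : M.PosSemidef) : 0 ≤ M.trace := by
  classical
  rw [Matrix.trace]
  refine Finset.sum_nonneg fun i _ => ?_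
  have := hM.dotProduct_mulVec_nonneg (Pi.single i 1)
  simpa [Matrix.mulVec_single, dotProduct, Pi.single_apply, Finset.sum_ite_eq'] using this

lemma psd_vecMulVec (v : n → ℝ) : (vecMulVec v v).PosSemidef := by
  refine Matrix.PosSemidef.of_dotProduct_mulVec_nonneg ?_ ?_
  · ext i j; simp [vecMulVec_apply, Matrix.conjTranspose_apply, mul_comm]
  · intro x
    have h : x ⬝ᵥ (vecMulVec v v).mulVec x = (∑ i, v i * x i) * (∑ i, v i * x i) := by
      rw [Finset.sum_mul_sum]
      simp only [vecMulVec_apply, Matrix.mulVec, dotProduct, Finset.mul_sum]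
      refine Finset.sum_congr rfl fun i _ => Finset.sum_congr rfl fun j _ => by ring
    simpa [h] using mul_self_nonneg _

lemma trace_vecMulVec_mul (v : n → ℝ) (M : Matrix n n ℝ) :
    (vecMulVec v v * M).trace = v ⬝ᵥ M.mulVec v := by
  simp only [Matrix.trace, Matrix.diag, Matrix.mul_apply, vecMulVec_apply, dotProduct,
    Matrix.mulVec, Finset.mul_sum]
  rw [Finset.sum_comm]
  refine Finset.sum_congr rfl fun i _ => Finset.sum_congr rfl fun j _ => by ring

lemma trace_transpose_mul_comm (X Y : Matrix n n ℝ) : (Yᵀ * X).trace = (Xᵀ * Y).trace := by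
  rw [← Matrix.trace_transpose (Yᵀ * X), Matrix.transpose_mul, Matrix.transpose_transpose]

lemma cs_trace (X Y : Matrix n n ℝ) :
    (Xᵀ * Y).trace ^ 2 ≤ (Xᵀ * X).trace * (Yᵀ * Y).trace := by
  set p := (Xᵀ * X).trace
  set q := (Yᵀ * Y).trace
  set r := (Xᵀ * Y).trace with hr
  have key : ∀ l : ℝ, 0 ≤ q * (l * l) + (-(2 * r)) * l + p := by
    intro l
    have hpsd : ((X - l • Y)ᴴ * (X - l • Y)).PosSemidef :=
      Matrix.posSemidef_conjTranspose_mul_self _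
    have h0 := trace_nonneg_of_psd hpsd
    have hexp : ((X - l • Y)ᴴ * (X - l • Y)).trace
        = q * (l * l) + (-(2 * r)) * l + p := by
      have hct : ∀ A : Matrix n n ℝ, Aᴴ = Aᵀ := fun A => rfl
      rw [hct]
      simp only [Matrix.transpose_sub, Matrix.transpose_smul, Matrix.sub_mul, Matrix.mul_sub,
        Matrix.smul_mul, Matrix.mul_smul, Matrix.trace_sub, Matrix.trace_smul, smul_smul,
        smul_eq_mul]
      rw [trace_transpose_mul_comm X Y]
      ring
    linarith [hexp ▸ h0]
  have hd := discrim_le_zero key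
  rw [discrim] at hd
  nlinarith [hd]

lemma eq_zero_of_trace_transpose_mul_self (X : Matrix n n ℝ) (h : (Xᵀ * X).trace = 0) :
    X = 0 := by
  have hh : (Xᵀ * X).trace = ∑ j, ∑ i, X i j ^ 2 := by
    simp [Matrix.trace, Matrix.diag, Matrix.mul_apply, sq]
  rw [hh] at h
  ext i j
  have h1 := (Finset.sum_eq_zero_iff_of_nonneg (fun j _ => Finset.sum_nonneg
    (fun i _ => sq_nonneg (X i j)))).1 h j (Finset.mem_univ j)
  have h2 := (Finset.sum_eq_zero_iff_of_nonneg (fun i _ => sq_nonneg (X i j))).1 h1 i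
    (Finset.mem_univ i)
  simpa using pow_eq_zero_iff (n := 2) (by norm_num) |>.1 h2

lemma pinv_symm {H X : Matrix n n ℝ} (hH : Hᵀ = H) (c1 : H*X*H = H) (c2 : X*H*X = X)
    (c3 : (H*X)ᵀ = H*X) (c4 : (X*H)ᵀ = X*H) : Xᵀ = X := by
  have e1 : H * Xᵀ = X * H := by
    have h : (X*H)ᵀ = H * Xᵀ := by rw [Matrix.transpose_mul, hH]
    rw [← h, c4]
  have e2 : Xᵀ * H = H * X := by
    have h : (H*X)ᵀ = Xᵀ * H := by rw [Matrix.transpose_mul, hH]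
    rw [← h, c3]
  have e3 : X = X * Xᵀ * H := by
    conv_lhs => rw [← c2]
    rw [Matrix.mul_assoc X H X, ← e2, ← Matrix.mul_assoc]
  have e4 : X = X * X * H := by
    calc X = X * Xᵀ * H := e3
      _ = X * Xᵀ * (H*X*H) := by rw [c1]
      _ = (X * Xᵀ * H) * (X * H) := by noncomm_ring
      _ = X * (X * H) := by rw [← e3]
      _ = X * X * H := by rw [Matrix.mul_assoc]
  calc Xᵀ = (X*X*H)ᵀ := by rw [← e4]
    _ = H * (Xᵀ * Xᵀ) := by
        rw [Matrix.transpose_mul, Matrix.transpose_mul, hH]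
    _ = (H * Xᵀ) * Xᵀ := by rw [Matrix.mul_assoc]
    _ = (X * H) * Xᵀ := by rw [e1]
    _ = X * (H * Xᵀ) := by rw [Matrix.mul_assoc]
    _ = X * (X * H) := by rw [e1]
    _ = X := by rw [← Matrix.mul_assoc, ← e4]

variable [DecidableEq n]

lemma step_lemma {A B : Matrix n n ℝ} (hA : A.PosSemidef) (hB : B.PosSemidef) (v : n → ℝ)
    (hAB : A = B + vecMulVec v v) (X : Matrix n n ℝ)
    (c1 : hA.sqrt * X * hA.sqrt = hA.sqrt) (c2 : X * hA.sqrt * X = X)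
    (c3 : (hA.sqrt * X)ᵀ = hA.sqrt * X) (c4 : (X * hA.sqrt)ᵀ = X * hA.sqrt) :
    v ⬝ᵥ X.mulVec v ≤ 2 * hA.sqrt.trace - 2 * hB.sqrt.trace := by
  set H := hA.sqrt with hHdef
  set S := hB.sqrt with hSdef
  have hHpsd : H.PosSemidef := hA.posSemidef_sqrt
  have hSpsd : S.PosSemidef := hB.posSemidef_sqrt
  have hHt : Hᵀ = H := hHpsd.isHermitian
  have hSt : Sᵀ = S := hSpsd.isHermitian
  have hHH : H * H = A := hA.sqrt_mul_self
  have hSS : S * S = B := hB.sqrt_mul_self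
  have hXt : Xᵀ = X := pinv_symm hHt c1 c2 c3 c4
  have hXpsd : X.PosSemidef := by
    have h := hHpsd.conjTranspose_mul_mul_same X
    rwa [show (Xᴴ : Matrix n n ℝ) = X from hXt, c2] at h
  set C := hXpsd.sqrt with hCdef
  have hCpsd : C.PosSemidef := hXpsd.posSemidef_sqrt
  have hCt : Cᵀ = C := hCpsd.isHermitian
  have hCC : C * C = X := hXpsd.sqrt_mul_self
  have hP : (1 - H * X) * A = 0 := by
    have h1 : H * X * A = A := by
      rw [← hHH, show H * X * (H * H) = (H * X * H) * H from by noncomm_ring, c1]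
    rw [Matrix.sub_mul, Matrix.one_mul, h1, sub_self]
  have hZ : S * (H * X) = S := by
    set Z := S * (1 - H * X) with hZdef
    have hZt : Zᵀ = (1 - H * X) * S := by
      rw [hZdef, Matrix.transpose_mul, Matrix.transpose_sub, Matrix.transpose_one, c3, hSt]
    have hM1 : Zᵀ * Z = (1 - H * X) * B * (1 - H * X) := by
      rw [hZt, hZdef, ← hSS]; noncomm_ring
    have h0 : (1 - H * X) * A * (1 - H * X) = 0 := by rw [hP, Matrix.zero_mul]
    have hsum : Zᵀ * Z + (1 - H * X) * vecMulVec v v * (1 - H * X) = 0 := by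
      rw [hM1, ← h0, hAB]; noncomm_ring
    have hM2psd : ((1 - H * X) * vecMulVec v v * (1 - H * X)).PosSemidef := by
      have h := (psd_vecMulVec v).mul_mul_conjTranspose_same (1 - H * X)
      rwa [show ((1 - H * X)ᴴ : Matrix n n ℝ) = 1 - H * X from by
        rw [show ((1 - H * X)ᴴ : Matrix n n ℝ) = (1 - H * X)ᵀ from rfl,
          Matrix.transpose_sub, Matrix.transpose_one, c3]] at h
    have hM1psd : (Zᵀ * Z).PosSemidef := by
      have h := Matrix.posSemidef_conjTranspose_mul_self Z
      rwa [show (Zᴴ : Matrix n n ℝ) = Zᵀ from rfl] at h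
    have htr : (Zᵀ * Z).trace = 0 := by
      have h1 := trace_nonneg_of_psd hM1psd
      have h2 := trace_nonneg_of_psd hM2psd
      have h3 : (Zᵀ * Z).trace + ((1 - H * X) * vecMulVec v v * (1 - H * X)).trace = 0 := by
        rw [← Matrix.trace_add, hsum, Matrix.trace_zero]
      linarith
    have hZ0 : Z = 0 := eq_zero_of_trace_transpose_mul_self Z htr
    have h4 : S * 1 - S * (H * X) = 0 := by rw [← Matrix.mul_sub, ← hZdef, hZ0]
    rw [Matrix.mul_one] at h4
    exact (sub_eq_zero.mp h4).symm
  -- trace identities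
  have key1 : ((S*C)ᵀ * (H*C)).trace = S.trace := by
    calc ((S*C)ᵀ * (H*C)).trace = ((C*S) * (H*C)).trace := by
          rw [Matrix.transpose_mul, hCt, hSt]
      _ = ((H*C) * (C*S)).trace := trace_mul_comm _ _
      _ = ((H*X) * S).trace := by
          rw [show (H*C) * (C*S) = (H*X)*S from by rw [← hCC]; noncomm_ring]
      _ = (S * (H*X)).trace := trace_mul_comm _ _
      _ = S.trace := by rw [hZ]
  have keyq : ((H*C)ᵀ * (H*C)).trace = H.trace := by
    calc ((H*C)ᵀ * (H*C)).trace = ((C*H) * (H*C)).trace := by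
          rw [Matrix.transpose_mul, hCt, hHt]
      _ = ((H*C) * (C*H)).trace := trace_mul_comm _ _
      _ = (H*X*H).trace := by
          rw [show (H*C) * (C*H) = H*X*H from by rw [← hCC]; noncomm_ring]
      _ = H.trace := by rw [c1]
  have keyp : ((S*C)ᵀ * (S*C)).trace = H.trace - v ⬝ᵥ X.mulVec v := by
    calc ((S*C)ᵀ * (S*C)).trace = ((C*S) * (S*C)).trace := by
          rw [Matrix.transpose_mul, hCt, hSt]
      _ = ((S*C) * (C*S)).trace := trace_mul_comm _ _
      _ = (B * X).trace := by
          rw [show (S*C) * (C*S) = S*X*S from by rw [← hCC]; noncomm_ring,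
            trace_mul_comm, show S * (S*X) = B * X from by rw [← hSS]; noncomm_ring]
      _ = (A * X).trace - (vecMulVec v v * X).trace := by
          rw [hAB, Matrix.add_mul, Matrix.trace_add]; ring
      _ = H.trace - v ⬝ᵥ X.mulVec v := by
          rw [trace_vecMulVec_mul, ← hHH, Matrix.mul_assoc, trace_mul_comm, c1]
  have hcs := cs_trace (S*C) (H*C)
  rw [key1, keyq, keyp] at hcs
  have hp : 0 ≤ H.trace - v ⬝ᵥ X.mulVec v := by
    rw [← keyp]
    exact trace_nonneg_of_psd (by
      have h := Matrix.posSemidef_conjTranspose_mul_self (S*C)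
      rwa [show ((S*C)ᴴ : Matrix n n ℝ) = (S*C)ᵀ from rfl] at h)
  have hq : 0 ≤ H.trace := trace_nonneg_of_psd hHpsd
  have ht : 0 ≤ S.trace := trace_nonneg_of_psd hSpsd
  nlinarith [hcs, hp, hq, ht, sq_nonneg (v ⬝ᵥ X.mulVec v)]

end Aux

theorem fullmatrix_adagrad_trace_bound {d T : ℕ} (g : ℕ → Fin d → ℝ)
    (G : ℕ → Matrix (Fin d) (Fin d) ℝ)
    (hG : ∀ t, G t = ∑ s ∈ Finset.Icc 1 t, Matrix.vecMulVec (g s) (g s))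
    (hpsd : ∀ t, (G t).PosSemidef)
    (Hd : ℕ → Matrix (Fin d) (Fin d) ℝ)
    (hpen : ∀ t, (hpsd t).sqrt * Hd t * (hpsd t).sqrt = (hpsd t).sqrt ∧
        Hd t * (hpsd t).sqrt * Hd t = Hd t ∧
        ((hpsd t).sqrt * Hd t)ᵀ = (hpsd t).sqrt * Hd t ∧
        (Hd t * (hpsd t).sqrt)ᵀ = Hd t * (hpsd t).sqrt) :
    ∑ t ∈ Finset.Icc 1 T, g t ⬝ᵥ (Hd t).mulVec (g t)
      ≤ 2 * ((hpsd T).sqrt).trace := by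
  induction T with
  | zero =>
      rw [show Finset.Icc 1 0 = (∅ : Finset ℕ) from Finset.Icc_eq_empty (by norm_num),
        Finset.sum_empty]
      exact mul_nonneg (by norm_num) (trace_nonneg_of_psd (hpsd 0).posSemidef_sqrt)
  | succ T ih =>
      rw [Finset.sum_Icc_succ_top (Nat.one_le_iff_ne_zero.mpr (Nat.succ_ne_zero T))]
      have hAB : G (T + 1) = G T + vecMulVec (g (T + 1)) (g (T + 1)) := by
        rw [hG (T + 1), hG T, Finset.sum_Icc_succ_top (Nat.one_le_iff_ne_zero.mpr
          (Nat.succ_ne_zero T))]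
      obtain ⟨c1, c2, c3, c4⟩ := hpen (T + 1)
      have hstep := step_lemma (hpsd (T + 1)) (hpsd T) (g (T + 1)) hAB (Hd (T + 1)) c1 c2 c3 c4
      linarith
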